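/- Let δ > 0, a ≥ δ/2, and define the truncated Huber loss ψ(u) = min{h_δ(u), a}, where h_δ(u) = u²/(2δ) for |u| ≤ δ and h_δ(u) = |u| − δ/2 for |u| > δ. Then for any A ≥ 1/(2δ), the function A·u² − ψ(u) is convex on ℝ. -/

import Mathlib

theorem stmt_16 (δ a A : ℝ) (hδ : 0 < δ) (ha : δ / 2 ≤ a) (hA : 1 / (2 * δ) ≤ A) :
    ConvexOn ℝ Set.univ
      (fun u : ℝ => A * u ^ 2 -
        min (if |u| ≤ δ then u ^ 2 / (2 * δ) else |u| - δ / 2) a) := by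
  have h2δ : (0:ℝ) < 2 * δ := by linarith
  -- convexity of g1 u = (A - 1/(2δ)) u^2 + (max (|u|-δ) 0)^2 / (2δ)
  have hsq : ConvexOn ℝ Set.univ fun u : ℝ => u ^ 2 :=
    (even_two).convexOn_pow
  have h1 : ConvexOn ℝ Set.univ fun u : ℝ => (A - 1 / (2 * δ)) * u ^ 2 := by
    have := hsq.smul (sub_nonneg.2 hA)
    simpa [smul_eq_mul] using this
  have habs : ConvexOn ℝ Set.univ fun u : ℝ => |u| := by
    have e : (norm : ℝ → ℝ) = fun u => |u| := funext Real.norm_eq_abs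
    rw [← e]
    exact convexOn_univ_norm
  have hm : ConvexOn ℝ Set.univ fun u : ℝ => max (|u| - δ) 0 := by
    have := (habs.add_const (-δ)).sup (convexOn_const 0 convex_univ)
    simpa [sub_eq_add_neg, Pi.sup_def] using this
  have hm2 : ConvexOn ℝ Set.univ fun u : ℝ => (max (|u| - δ) 0) ^ 2 := by
    have := hm.pow (fun x _ => le_max_right _ _) 2
    simpa [Pi.pow_def] using this
  have hg1 : ConvexOn ℝ Set.univ
      (fun u : ℝ => (A - 1 / (2 * δ)) * u ^ 2 + (max (|u| - δ) 0) ^ 2 / (2 * δ)) := by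
    refine h1.add ?_
    have := hm2.smul (le_of_lt (inv_pos.2 h2δ))
    simpa [smul_eq_mul, div_eq_inv_mul] using this
  have hg2 : ConvexOn ℝ Set.univ fun u : ℝ => A * u ^ 2 - a := by
    have hA0 : 0 ≤ A := le_trans (by positivity) hA
    have := (hsq.smul hA0).add_const (-a)
    simpa [smul_eq_mul, sub_eq_add_neg, Pi.add_def] using this
  have hsup : ConvexOn ℝ Set.univ ((fun u : ℝ => (A - 1 / (2 * δ)) * u ^ 2 + (max (|u| - δ) 0) ^ 2 / (2 * δ)) ⊔
      fun u : ℝ => A * u ^ 2 - a) := hg1.sup hg2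
  convert hsup using 1
  funext u
  simp only [Pi.sup_apply]
  rcases le_or_gt (|u|) δ with h | h
  · rw [if_pos h]
    have hmax : max (|u| - δ) 0 = 0 := max_eq_right (by linarith)
    rw [hmax]
    have e1 : (A - 1 / (2 * δ)) * u ^ 2 + (0:ℝ) ^ 2 / (2 * δ)
        = A * u ^ 2 - u ^ 2 / (2 * δ) := by field_simp; ring
    rw [e1]
    rcases min_cases (u ^ 2 / (2 * δ)) a with ⟨he, hle⟩ | ⟨he, hle⟩
    · rw [he, max_eq_left (by linarith)]
    · rw [he, max_eq_right (by linarith)]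
  · rw [if_neg (not_le.2 h)]
    have hmax : max (|u| - δ) 0 = |u| - δ := max_eq_left (by linarith)
    have hsq' : |u| ^ 2 = u ^ 2 := sq_abs u
    have key : (A - 1 / (2 * δ)) * u ^ 2 + (|u| - δ) ^ 2 / (2 * δ)
        = A * u ^ 2 - (|u| - δ / 2) := by
      field_simp
      nlinarith [sq_abs u]
    rw [hmax, key]
    rcases min_cases (|u| - δ / 2) a with ⟨he, hle⟩ | ⟨he, hle⟩
    · rw [he, max_eq_left]; linarith
    · rw [he, max_eq_right]; linarith
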